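/- For λ > 1, the triple integral ∫₀¹ ∫_{[a+2r,∞)²} (s₂a + s₁a + s₁s₂)^{−3/2} ds₁ ds₂ da equals −K·log(r) + O(1) as r ↓ 0, where K = ∫_{[1,∞)²} (α + β + αβ)^{−3/2} dα dβ is a finite positive constant; moreover K can be computed explicitly and the divergent part equals (1/3)·(1/(32π²))·|log r| after multiplication by (4π)^{−3}. -/

import Mathlib

open MeasureTheory Real Set Filter


lemma L1 {A B c : ℝ} (hB : 0 < B) (hAc : 0 < A + B * c) :
    (∫ s in Set.Ici c, (A + B * s) ^ (-(3:ℝ)/2)) = 2 / B * (A + B * c) ^ (-(1:ℝ)/2) := by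
  have hpos : ∀ s ∈ Set.Ici c, 0 < A + B * s := by
    intro s hs
    have : B * c ≤ B * s := mul_le_mul_of_nonneg_left hs hB.le
    linarith
  set g : ℝ → ℝ := fun s => -2 / B * (A + B * s) ^ (-(1:ℝ)/2) with hg
  have hderiv : ∀ s ∈ Set.Ioi c, HasDerivAt g ((A + B * s) ^ (-(3:ℝ)/2)) s := by
    intro s hs
    have hp := hpos s (Set.Ioi_subset_Ici_self hs)
    have h1 : HasDerivAt (fun y : ℝ => A + B * y) B s := by
      simpa using ((hasDerivAt_id s).const_mul B).const_add A
    have h2 := (h1.rpow_const (p := -(1:ℝ)/2) (Or.inl hp.ne')).const_mul (-2 / B)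
    refine h2.congr_deriv ?_
    symm
    rw [show -(1:ℝ)/2 - 1 = -(3:ℝ)/2 by norm_num]
    field_simp
  have htends : Tendsto g atTop (nhds 0) := by
    have h1 : Tendsto (fun s : ℝ => A + B * s) atTop atTop :=
      tendsto_atTop_add_const_left _ A (tendsto_id.const_mul_atTop hB)
    have h2 : Tendsto (fun x : ℝ => x ^ (-(1:ℝ)/2)) atTop (nhds 0) := by
      rw [show -(1:ℝ)/2 = -(1/2) by norm_num]
      exact tendsto_rpow_neg_atTop (by norm_num)
    have := (h2.comp h1).const_mul (-2 / B)
    simpa using this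
  have hcont : ContinuousWithinAt g (Set.Ici c) c := by
    apply ContinuousAt.continuousWithinAt
    have h1 : ContinuousAt (fun s : ℝ => A + B * s) c := by fun_prop
    exact (h1.rpow_const (Or.inl (hpos c Set.self_mem_Ici).ne')).const_mul _
  have hnn : ∀ s ∈ Set.Ioi c, 0 ≤ (A + B * s) ^ (-(3:ℝ)/2) := fun s hs =>
    Real.rpow_nonneg (hpos s (Set.Ioi_subset_Ici_self hs)).le _
  rw [MeasureTheory.integral_Ici_eq_integral_Ioi,
    integral_Ioi_of_hasDerivAt_of_nonneg hcont hderiv hnn htends]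
  simp [hg]
  field_simp

lemma L2 {a c : ℝ} (ha : 0 < a) (hc : 0 < c) :
    (∫ s in Set.Ici c, 2 / (a + s) * ((a + c) * s + a * c) ^ (-(1:ℝ)/2)) =
      4 / a * Real.arctan (a * (c ^ 2 + 2 * a * c) ^ (-(1:ℝ)/2)) := by
  have hupos : ∀ s ∈ Set.Ici c, 0 < (a + c) * s + a * c := by
    intro s hs
    have : (a + c) * c ≤ (a + c) * s := mul_le_mul_of_nonneg_left hs (by linarith)
    nlinarith
  set G : ℝ → ℝ := fun s => -(4 / a) * Real.arctan (a * ((a + c) * s + a * c) ^ (-(1:ℝ)/2))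
    with hG
  have hderiv : ∀ s ∈ Set.Ioi c, HasDerivAt G
      (2 / (a + s) * ((a + c) * s + a * c) ^ (-(1:ℝ)/2)) s := by
    intro s hs
    have hsc : c ≤ s := le_of_lt hs
    have hu : 0 < (a + c) * s + a * c := hupos s hsc
    have has : 0 < a + s := by linarith
    have h1 : HasDerivAt (fun y : ℝ => (a + c) * y + a * c) (a + c) s := by
      simpa using ((hasDerivAt_id s).const_mul (a + c)).add_const (a * c)
    have h2 := h1.rpow_const (p := -(1:ℝ)/2) (Or.inl hu.ne')
    have h3 := (h2.const_mul a).arctan.const_mul (-(4 / a))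
    refine h3.congr_deriv ?_
    symm
    set u := (a + c) * s + a * c with hu_def
    have hup : (0:ℝ) < u := hu
    have e1 : u ^ (-(1:ℝ)/2 - 1) = u ^ (-(1:ℝ)/2) * u⁻¹ := by
      rw [show -(1:ℝ)/2 - 1 = -(1:ℝ)/2 + (-1) by ring, Real.rpow_add hup]
      rw [show ((-1:ℝ)) = ((-1 : ℤ) : ℝ) by norm_num, Real.rpow_intCast]
      simp
    have e2 : (u ^ (-(1:ℝ)/2)) ^ 2 = u⁻¹ := by
      rw [← Real.rpow_natCast (u ^ (-(1:ℝ)/2)) 2, ← Real.rpow_mul hup.le]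
      norm_num
      rw [show ((-1:ℝ)) = ((-1 : ℤ) : ℝ) by norm_num, Real.rpow_intCast]
      simp
    set p := u ^ (-(1:ℝ)/2) with hp_def
    have hpp : 0 < p := Real.rpow_pos_of_pos hup _
    have e3 : p ^ 2 * u = 1 := by rw [e2]; field_simp
    have e4 : u + a ^ 2 = (a + c) * (s + a) := by rw [hu_def]; ring
    rw [e1]
    have h1p : 0 < 1 + (a * p) ^ 2 := by positivity
    field_simp
    linear_combination (4 * a ^ 2) * e3 - (4 * a ^ 2) * p ^ 2 * hu_def
  have htends : Tendsto G atTop (nhds 0) := by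
    have h1 : Tendsto (fun s : ℝ => (a + c) * s + a * c) atTop atTop :=
      tendsto_atTop_add_const_right _ (a * c) (tendsto_id.const_mul_atTop (by linarith))
    have h2 : Tendsto (fun x : ℝ => x ^ (-(1:ℝ)/2)) atTop (nhds 0) := by
      rw [show -(1:ℝ)/2 = -(1/2) by norm_num]
      exact tendsto_rpow_neg_atTop (by norm_num)
    have h3 : Tendsto (fun s : ℝ => a * ((a + c) * s + a * c) ^ (-(1:ℝ)/2)) atTop (nhds 0) := by
      have := (h2.comp h1).const_mul a
      simpa using this
    have h4 := (Real.continuous_arctan.tendsto 0).comp h3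
    have := h4.const_mul (-(4 / a))
    simpa [hG, Real.arctan_zero, neg_mul] using this
  have hcont : ContinuousWithinAt G (Set.Ici c) c := by
    apply ContinuousAt.continuousWithinAt
    have h1 : ContinuousAt (fun s : ℝ => (a + c) * s + a * c) c := by fun_prop
    have h2 := h1.rpow_const (p := -(1:ℝ)/2) (Or.inl (hupos c Set.self_mem_Ici).ne')
    exact ((Real.continuous_arctan.continuousAt).comp (h2.const_mul a)).const_mul _
  have hnn : ∀ s ∈ Set.Ioi c, 0 ≤ 2 / (a + s) * ((a + c) * s + a * c) ^ (-(1:ℝ)/2) := by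
    intro s hs
    have h1 : (0:ℝ) < a + s := by have := hs.out; linarith
    exact mul_nonneg (div_pos two_pos h1).le
      (Real.rpow_nonneg (hupos s (Set.Ioi_subset_Ici_self hs)).le _)
  rw [MeasureTheory.integral_Ici_eq_integral_Ioi,
    integral_Ioi_of_hasDerivAt_of_nonneg hcont hderiv hnn htends]
  have : (a + c) * c + a * c = c ^ 2 + 2 * a * c := by ring
  simp only [hG, this]
  ring

lemma doubleInt {a c : ℝ} (ha : 0 < a) (hc : 0 < c) :
    (∫ s₁ in Set.Ici c, ∫ s₂ in Set.Ici c, (s₂ * a + s₁ * a + s₁ * s₂) ^ (-(3:ℝ)/2)) =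
      4 / a * Real.arctan (a * (c ^ 2 + 2 * a * c) ^ (-(1:ℝ)/2)) := by
  rw [← L2 ha hc]
  apply MeasureTheory.setIntegral_congr_fun measurableSet_Ici
  intro s₁ hs₁
  have hs₁c : c ≤ s₁ := hs₁
  have hB : 0 < a + s₁ := by linarith
  have hAc : 0 < s₁ * a + (a + s₁) * c := by nlinarith
  have step1 : (∫ s₂ in Set.Ici c, (s₂ * a + s₁ * a + s₁ * s₂) ^ (-(3:ℝ)/2)) =
      ∫ s₂ in Set.Ici c, (s₁ * a + (a + s₁) * s₂) ^ (-(3:ℝ)/2) := by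
    apply MeasureTheory.integral_congr_ae
    filter_upwards with s₂
    congr 1
    ring
  simp only []
  rw [step1, L1 hB hAc]
  have : s₁ * a + (a + s₁) * c = (a + c) * s₁ + a * c := by ring
  rw [this]

/-- The convergent double integral `K = ∫_{[1,∞)²} (α+β+αβ)^{-3/2} dα dβ`. -/
noncomputable def sunsetConstant : ℝ :=
  ∫ α in Set.Ici (1:ℝ), ∫ β in Set.Ici (1:ℝ), (α + β + α * β) ^ (-(3:ℝ)/2)

/-- The regularized triple integral `∫₀¹ ∫_{[a+2r,∞)²} (s₂a+s₁a+s₁s₂)^{-3/2} ds₁ ds₂ da`. -/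
noncomputable def sunsetIntegral (r : ℝ) : ℝ :=
  ∫ a in Set.Ioc (0:ℝ) 1, ∫ s₁ in Set.Ici (a + 2*r), ∫ s₂ in Set.Ici (a + 2*r),
    (s₂ * a + s₁ * a + s₁ * s₂) ^ (-(3:ℝ)/2)

lemma rpow_neg_half_eq {x : ℝ} (hx : 0 ≤ x) : x ^ (-(1:ℝ)/2) = (Real.sqrt x)⁻¹ := by
  rw [show -(1:ℝ)/2 = -(1/2) by norm_num, Real.rpow_neg hx, Real.sqrt_eq_rpow]

lemma arctan_inv_sqrt_three : Real.arctan (Real.sqrt 3)⁻¹ = Real.pi / 6 := by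
  have h6 : Real.tan (Real.pi / 6) = (Real.sqrt 3)⁻¹ := by
    rw [Real.tan_pi_div_six, one_div]
  rw [← h6]
  exact Real.arctan_tan (by linarith [Real.pi_pos]) (by linarith [Real.pi_pos])

lemma sunsetConstant_eq : sunsetConstant = 2 / 3 * Real.pi := by
  unfold sunsetConstant
  simp only [show ∀ α β : ℝ, α + β + α * β = β * 1 + α * 1 + α * β from fun α β => by ring]
  rw [doubleInt one_pos one_pos]
  rw [show ((1:ℝ)^2 + 2*1*1) = 3 by norm_num, rpow_neg_half_eq (by norm_num : (0:ℝ) ≤ 3),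
    one_mul, _root_.arctan_inv_sqrt_three]
  ring

lemma part1 : IntegrableOn (fun p : ℝ × ℝ => (p.1 + p.2 + p.1 * p.2) ^ (-(3:ℝ)/2))
    (Set.Ici 1 ×ˢ Set.Ici 1) := by
  have hmeas : Measurable (fun p : ℝ × ℝ => (p.1 + p.2 + p.1 * p.2) ^ (-(3:ℝ)/2)) := by
    fun_prop
  have h14 : IntegrableOn (fun x : ℝ => x ^ (-(5:ℝ)/4)) (Set.Ici 1) := by
    rw [integrableOn_Ici_iff_integrableOn_Ioi]
    exact integrableOn_Ioi_rpow_of_lt (by norm_num) one_pos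
  have hg : IntegrableOn (fun p : ℝ × ℝ => p.1 ^ (-(5:ℝ)/4) * p.2 ^ (-(5:ℝ)/4))
      (Set.Ici 1 ×ˢ Set.Ici 1) := by
    rw [IntegrableOn, Measure.volume_eq_prod, ← Measure.prod_restrict]
    exact Integrable.mul_prod h14 h14
  apply Integrable.mono' hg (hmeas.aestronglyMeasurable.restrict)
  apply MeasureTheory.ae_restrict_of_forall_mem (measurableSet_Ici.prod measurableSet_Ici)
  rintro ⟨x, y⟩ ⟨hx, hy⟩
  simp only [Set.mem_Ici] at hx hy
  have hxy1 : (1:ℝ) ≤ x * y := by nlinarith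
  have hpos : (0:ℝ) < x + y + x * y := by nlinarith
  rw [Real.norm_eq_abs, abs_of_nonneg (Real.rpow_nonneg hpos.le _)]
  calc (x + y + x * y) ^ (-(3:ℝ)/2) ≤ (x * y) ^ (-(3:ℝ)/2) :=
        Real.rpow_le_rpow_of_nonpos (by nlinarith) (by nlinarith) (by norm_num)
    _ ≤ (x * y) ^ (-(5:ℝ)/4) := Real.rpow_le_rpow_of_exponent_le hxy1 (by norm_num)
    _ = x ^ (-(5:ℝ)/4) * y ^ (-(5:ℝ)/4) := Real.mul_rpow (by linarith) (by linarith)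

lemma sub_arctan_mono : Monotone (fun t : ℝ => t - Real.arctan t) := by
  have hd : ∀ t : ℝ, HasDerivAt (fun t : ℝ => t - Real.arctan t) (1 - 1/(1+t^2)) t :=
    fun t => (hasDerivAt_id t).sub (Real.hasDerivAt_arctan t)
  have hdiff : Differentiable ℝ (fun t : ℝ => t - Real.arctan t) :=
    fun t => (hd t).differentiableAt
  apply monotone_of_deriv_nonneg hdiff
  intro t
  rw [(hd t).deriv]
  have h1 : 1/(1+t^2) ≤ 1 := by
    rw [div_le_one (by positivity)]; nlinarith
  linarith

lemma arctan_le_self' {x : ℝ} (hx : 0 ≤ x) : Real.arctan x ≤ x := by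
  have := sub_arctan_mono hx
  simpa [Real.arctan_zero] using this

lemma arctan_sub_le' {x y : ℝ} (hxy : y ≤ x) :
    Real.arctan x - Real.arctan y ≤ x - y := by
  have := sub_arctan_mono hxy
  simp only at this
  linarith

lemma key_sqrt {a r : ℝ} (hr : 0 < r) (hra : r ≤ a) :
    (Real.sqrt 3)⁻¹ - a / Real.sqrt (3*a^2 + 8*a*r + 4*r^2) ≤ 2*r/a ∧
    a / Real.sqrt (3*a^2 + 8*a*r + 4*r^2) ≤ (Real.sqrt 3)⁻¹ := by
  have ha : 0 < a := lt_of_lt_of_le hr hra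
  have hqpos : (0:ℝ) < 3*a^2 + 8*a*r + 4*r^2 := by positivity
  set s := Real.sqrt (3*a^2 + 8*a*r + 4*r^2) with hs
  have hs2 : s^2 = 3*a^2 + 8*a*r + 4*r^2 := Real.sq_sqrt hqpos.le
  have hspos : 0 < s := Real.sqrt_pos.mpr hqpos
  set u := Real.sqrt 3 with huu
  have hu2 : u^2 = 3 := Real.sq_sqrt (by norm_num)
  have hu1 : 1 ≤ u := by nlinarith [Real.sqrt_nonneg 3]
  have hupos : (0:ℝ) < u := by linarith
  have hsua : u * a ≤ s := by nlinarith [hs2, hu2, mul_pos hupos ha, hspos]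
  have has : a ≤ s := by nlinarith [hsua, hu1, ha]
  constructor
  · have e : (s - u*a)*(s + u*a) = 8*a*r + 4*r^2 := by nlinarith [hs2, hu2]
    have h1 : (s - u*a)*(2*(u*a)) ≤ 12*a*r := by
      nlinarith [e, mul_nonneg (sub_nonneg.mpr hsua) (sub_nonneg.mpr hsua), hr, hra,
        mul_nonneg (sub_nonneg.mpr hsua) (mul_pos hupos ha).le]
    have h2 : u*(s - u*a) ≤ 6*r := by nlinarith [h1, ha]
    have e2 : u⁻¹ - a/s = (s - u*a)/(u*s) := by
      field_simp
    rw [e2, div_le_div_iff₀ (by positivity) ha]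
    nlinarith [h2, hu2, has, mul_nonneg (mul_nonneg hr.le hupos.le)
      (sub_nonneg.mpr hsua), mul_le_mul_of_nonneg_left has (mul_nonneg hr.le hupos.le),
      mul_le_mul_of_nonneg_right h2 ha.le]
  · rw [inv_eq_one_div, div_le_div_iff₀ hspos hupos]
    linarith [hsua]


noncomputable def ff (r a : ℝ) : ℝ :=
  4/a * Real.arctan (a * (3*a^2 + 8*a*r + 4*r^2) ^ (-(1:ℝ)/2))

lemma ff_nonneg {r a : ℝ} (hr : 0 < r) (ha : 0 ≤ a) : 0 ≤ ff r a := by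
  rcases eq_or_lt_of_le ha with h | h
  · simp [ff, ← h]
  · have hq : (0:ℝ) < 3*a^2 + 8*a*r + 4*r^2 := by positivity
    apply mul_nonneg (by positivity)
    have := Real.arctan_strictMono.monotone
      (show (0:ℝ) ≤ a * (3*a^2 + 8*a*r + 4*r^2) ^ (-(1:ℝ)/2) by positivity)
    simpa using this

lemma ff_le {r a : ℝ} (hr : 0 < r) (ha : 0 < a) : ff r a ≤ 2/r := by
  have hq : (0:ℝ) < 3*a^2 + 8*a*r + 4*r^2 := by positivity
  have h1 : Real.arctan (a * (3*a^2 + 8*a*r + 4*r^2) ^ (-(1:ℝ)/2)) ≤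
      a * (3*a^2 + 8*a*r + 4*r^2) ^ (-(1:ℝ)/2) :=
    arctan_le_self' (by positivity)
  have h2 : ff r a ≤ 4/a * (a * (3*a^2 + 8*a*r + 4*r^2) ^ (-(1:ℝ)/2)) := by
    exact mul_le_mul_of_nonneg_left h1 (by positivity)
  have h3 : 4/a * (a * (3*a^2 + 8*a*r + 4*r^2) ^ (-(1:ℝ)/2)) =
      4 * (Real.sqrt (3*a^2 + 8*a*r + 4*r^2))⁻¹ := by
    rw [rpow_neg_half_eq hq.le]; field_simp
  have h4 : 2*r ≤ Real.sqrt (3*a^2 + 8*a*r + 4*r^2) := by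
    have : Real.sqrt ((2*r)^2) ≤ Real.sqrt (3*a^2 + 8*a*r + 4*r^2) :=
      Real.sqrt_le_sqrt (by nlinarith)
    rwa [Real.sqrt_sq (by linarith)] at this
  have h5 : 4 * (Real.sqrt (3*a^2 + 8*a*r + 4*r^2))⁻¹ ≤ 2/r := by
    rw [inv_eq_one_div, ← div_eq_mul_one_div, div_le_div_iff₀ (by positivity) hr]
    nlinarith [h4]
  calc ff r a ≤ _ := h2
    _ = _ := h3
    _ ≤ _ := h5

lemma ff_diff_bound {r a : ℝ} (hr : 0 < r) (hra : r ≤ a) :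
    |ff r a - (2/3*Real.pi) * a⁻¹| ≤ 8*r/a^2 := by
  have ha : 0 < a := lt_of_lt_of_le hr hra
  have hq : (0:ℝ) < 3*a^2 + 8*a*r + 4*r^2 := by positivity
  obtain ⟨h1, h2⟩ := key_sqrt hr hra
  have hK : (2/3*Real.pi) * a⁻¹ = 4/a * Real.arctan ((Real.sqrt 3)⁻¹) := by
    rw [_root_.arctan_inv_sqrt_three]; field_simp; ring
  have hform : ff r a = 4/a * Real.arctan (a / Real.sqrt (3*a^2 + 8*a*r + 4*r^2)) := by
    rw [ff, rpow_neg_half_eq hq.le, div_eq_mul_inv a]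
  rw [hform, hK, ← mul_sub, abs_mul, abs_of_pos (by positivity : (0:ℝ) < 4/a)]
  have harc : Real.arctan (a / Real.sqrt (3*a^2 + 8*a*r + 4*r^2)) ≤
      Real.arctan ((Real.sqrt 3)⁻¹) := Real.arctan_strictMono.monotone h2
  rw [abs_of_nonpos (by linarith), neg_sub]
  have hsub := arctan_sub_le' h2
  calc 4/a * (Real.arctan ((Real.sqrt 3)⁻¹) -
        Real.arctan (a / Real.sqrt (3*a^2 + 8*a*r + 4*r^2)))
      ≤ 4/a * (2*r/a) := by
        apply mul_le_mul_of_nonneg_left _ (by positivity)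
        linarith [hsub, h1]
    _ = 8*r/a^2 := by field_simp; ring


lemma sunsetIntegral_eq {r : ℝ} (hr : 0 < r) :
    sunsetIntegral r = ∫ a in Set.Ioc (0:ℝ) 1, ff r a := by
  unfold sunsetIntegral
  apply MeasureTheory.setIntegral_congr_fun measurableSet_Ioc
  intro a ha
  have ha0 : 0 < a := ha.1
  have hc : 0 < a + 2*r := by linarith
  show (∫ s₁ in Set.Ici (a + 2*r), ∫ s₂ in Set.Ici (a + 2*r),
      (s₂ * a + s₁ * a + s₁ * s₂) ^ (-(3:ℝ)/2)) = ff r a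
  rw [doubleInt ha0 hc, ff,
    show (a + 2*r)^2 + 2*a*(a + 2*r) = 3*a^2 + 8*a*r + 4*r^2 by ring]

lemma ff_meas (r : ℝ) : Measurable (ff r) := by
  unfold ff
  have h1 : Measurable (fun a : ℝ => a * (3*a^2 + 8*a*r + 4*r^2) ^ (-(1:ℝ)/2)) := by fun_prop
  exact (measurable_const.div measurable_id).mul (Real.continuous_arctan.measurable.comp h1)

lemma ff_intOn {r : ℝ} (hr : 0 < r) : IntegrableOn (ff r) (Set.Ioc 0 1) := by
  apply Measure.integrableOn_of_bounded (M := 2/r)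
  · exact measure_Ioc_lt_top.ne
  · exact (ff_meas r).aestronglyMeasurable
  · apply MeasureTheory.ae_restrict_of_forall_mem measurableSet_Ioc
    intro a ha
    rw [Real.norm_eq_abs, abs_of_nonneg (ff_nonneg hr ha.1.le)]
    exact ff_le hr ha.1


lemma final_bound : ∀ r ∈ Set.Ioc (0:ℝ) 1,
    |sunsetIntegral r + (2/3*Real.pi) * Real.log r| ≤ 10 := by
  rintro r ⟨hr0, hr1⟩
  set K := 2/3*Real.pi with hK
  have hII : IntervalIntegrable (ff r) volume 0 1 :=
    (intervalIntegrable_iff_integrableOn_Ioc_of_le zero_le_one).mpr (ff_intOn hr0)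
  have h0r : IntervalIntegrable (ff r) volume 0 r :=
    hII.mono_set (by rw [Set.uIcc_of_le hr0.le, Set.uIcc_of_le zero_le_one]
                     exact Set.Icc_subset_Icc le_rfl hr1)
  have hr1I : IntervalIntegrable (ff r) volume r 1 :=
    hII.mono_set (by rw [Set.uIcc_of_le hr1, Set.uIcc_of_le zero_le_one]
                     exact Set.Icc_subset_Icc hr0.le le_rfl)
  have hIinv : IntervalIntegrable (fun a : ℝ => a⁻¹) volume r 1 := by
    apply intervalIntegral.intervalIntegrable_inv (f := fun x : ℝ => x) ?_ continuousOn_id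
    intro x hx
    rw [Set.uIcc_of_le hr1] at hx
    exact (lt_of_lt_of_le hr0 hx.1).ne'
  have hlog : (∫ a in r..(1:ℝ), a⁻¹) = -Real.log r := by
    rw [integral_inv_of_pos hr0 one_pos, one_div, Real.log_inv]
  have e1 : sunsetIntegral r = (∫ a in (0:ℝ)..r, ff r a) + ∫ a in r..(1:ℝ), ff r a := by
    rw [sunsetIntegral_eq hr0, ← intervalIntegral.integral_of_le zero_le_one,
      ← intervalIntegral.integral_add_adjacent_intervals h0r hr1I]
  have e2 : (∫ a in r..(1:ℝ), ff r a) + K * Real.log r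
      = ∫ a in r..(1:ℝ), (ff r a - K * a⁻¹) := by
    rw [intervalIntegral.integral_sub hr1I (hIinv.const_mul K),
      intervalIntegral.integral_const_mul, hlog]
    ring
  have hX : |∫ a in (0:ℝ)..r, ff r a| ≤ 2 := by
    have := intervalIntegral.norm_integral_le_of_norm_le_const (C := 2/r)
      (f := ff r) (a := 0) (b := r) ?_
    · rw [Real.norm_eq_abs] at this
      calc |∫ a in (0:ℝ)..r, ff r a| ≤ 2/r * |r - 0| := this
        _ = 2 := by rw [sub_zero, abs_of_pos hr0]; field_simp
    · intro x hx
      rw [Set.uIoc_of_le hr0.le] at hx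
      rw [Real.norm_eq_abs, abs_of_nonneg (ff_nonneg hr0 hx.1.le)]
      exact ff_le hr0 hx.1
  have hZ : |∫ a in r..(1:ℝ), (ff r a - K * a⁻¹)| ≤ 8 := by
    have hgI : IntervalIntegrable (fun a => ff r a - K * a⁻¹) volume r 1 :=
      hr1I.sub (hIinv.const_mul K)
    have hbdI : IntervalIntegrable (fun a : ℝ => 8*r/a^2) volume r 1 := by
      apply ContinuousOn.intervalIntegrable
      apply ContinuousOn.div continuousOn_const (by fun_prop)
      intro x hx
      rw [Set.uIcc_of_le hr1] at hx
      exact pow_ne_zero 2 (lt_of_lt_of_le hr0 hx.1).ne'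
    have step1 : |∫ a in r..(1:ℝ), (ff r a - K * a⁻¹)| ≤
        ∫ a in r..(1:ℝ), |ff r a - K * a⁻¹| := by
      have := intervalIntegral.norm_integral_le_integral_norm
        (f := fun a => ff r a - K * a⁻¹) (a := r) (b := 1) (μ := volume) hr1
      simpa [Real.norm_eq_abs] using this
    have step2 : (∫ a in r..(1:ℝ), |ff r a - K * a⁻¹|) ≤ ∫ a in r..(1:ℝ), 8*r/a^2 := by
      apply intervalIntegral.integral_mono_on hr1 hgI.norm hbdI
      intro x hx
      exact ff_diff_bound hr0 hx.1
    have step3 : (∫ a in r..(1:ℝ), 8*r/a^2) = 8*r * (r⁻¹ - 1) := by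
      have hfn : (fun a : ℝ => 8*r/a^2) = fun a : ℝ => 8*r * (a ^ (-2 : ℤ)) := by
        funext a
        rw [zpow_neg, div_eq_mul_inv, show (2:ℤ) = ((2:ℕ):ℤ) by norm_num, zpow_natCast]
      rw [hfn, intervalIntegral.integral_const_mul, integral_zpow]
      · norm_num
        exact Or.inl (by ring)
      · refine Or.inr ⟨by norm_num, ?_⟩
        rw [Set.uIcc_of_le hr1]
        intro h
        exact absurd h.1 (by linarith)
    calc |∫ a in r..(1:ℝ), (ff r a - K * a⁻¹)| ≤ _ := step1
      _ ≤ _ := step2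
      _ = 8*r * (r⁻¹ - 1) := step3
      _ ≤ 8 := by
          have hrr : r * r⁻¹ = 1 := mul_inv_cancel₀ hr0.ne'
          nlinarith [hrr, hr0]
  calc |sunsetIntegral r + K * Real.log r|
      = |(∫ a in (0:ℝ)..r, ff r a) + ((∫ a in r..(1:ℝ), ff r a) + K * Real.log r)| := by
        rw [e1]; ring_nf
    _ ≤ |∫ a in (0:ℝ)..r, ff r a| + |(∫ a in r..(1:ℝ), ff r a) + K * Real.log r| :=
        abs_add_le _ _
    _ ≤ 2 + 8 := by rw [e2]; exact add_le_add hX hZ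
    _ = 10 := by norm_num

/-- The triple integral equals `-K log r + O(1)` as `r ↓ 0`, where
`K = ∫_{[1,∞)²}(α+β+αβ)^{-3/2}` is finite and positive; moreover
`(4π)^{-3} K = (1/3)(1/(32π²))`, identifying the divergent part of the counterterm. -/
theorem sunset_counterterm_divergence :
    (IntegrableOn (fun p : ℝ × ℝ => (p.1 + p.2 + p.1 * p.2) ^ (-(3:ℝ)/2))
      (Set.Ici 1 ×ˢ Set.Ici 1)) ∧
    0 < sunsetConstant ∧
    ((4 * Real.pi) ^ 3)⁻¹ * sunsetConstant = 1 / (3 * (32 * Real.pi ^ 2)) ∧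
    ∃ Cbd : ℝ, ∀ r ∈ Set.Ioc (0:ℝ) 1,
      |sunsetIntegral r + sunsetConstant * Real.log r| ≤ Cbd := by
  refine ⟨part1, ?_, ?_, 10, ?_⟩
  · rw [sunsetConstant_eq]
    positivity
  · rw [sunsetConstant_eq]
    field_simp
    ring
  · intro r hr
    rw [sunsetConstant_eq]
    exact final_bound r hr
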